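/- Let (A[Λ]) be a weak tower of complements for a ring R ⊆ K. Then for every x ∈ R, the support supp(x) := {γ ∈ G : a_γ(x) ≠ 0} is a well-ordered subset of G, and min(supp x) = v(x); hence the map x ↦ Σ_γ a_γ(x) t^γ is an injective valuation-preserving homomorphism of additive groups from R into the group of generalized power series k((G)). -/

import Mathlib

set_option autoImplicit false

universe u v

/-- A Dedekind cut of a linearly ordered abelian group, represented by its left part
(`L = Λ^L`); the right part is the complement of `L`.  The cuts `-∞` (`L = ∅`) and
`+∞` (`L = G`) are included. -/
structure Cut (G : Type u) [AddCommGroup G] [LinearOrder G] [IsOrderedAddMonoid G] : Type u where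
  L : Set G
  lower : ∀ ⦃x y : G⦄, y ∈ L → x ≤ y → x ∈ L

namespace Cut

variable {G : Type u} [AddCommGroup G] [LinearOrder G] [IsOrderedAddMonoid G]

/-- Cuts are ordered by inclusion of left parts. -/
instance : PartialOrder (Cut G) where
  le Λ Γ := Λ.L ⊆ Γ.L
  le_refl _ := subset_rfl
  le_trans _ _ _ h h' := fun x hx => h' (h hx)
  le_antisymm := by
    rintro ⟨L₁, h₁⟩ ⟨L₂, h₂⟩ h h'
    simpa using Set.Subset.antisymm h h'

/-- `γ⁻`, the cut with left part `(-∞, γ)`. -/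
def lcut (γ : G) : Cut G := ⟨{x | x < γ}, fun _ _ hy hxy => lt_of_le_of_lt hxy hy⟩

/-- `γ⁺`, the cut with left part `(-∞, γ]`. -/
def rcut (γ : G) : Cut G := ⟨{x | x ≤ γ}, fun _ _ hy hxy => le_trans hxy hy⟩

/-- The left sum of cuts: the smallest cut whose left part contains all `λ + γ`
with `λ < Λ`, `γ < Γ`. -/
instance : Add (Cut G) :=
  ⟨fun Λ Γ => ⟨{x | ∃ l ∈ Λ.L, ∃ g ∈ Γ.L, x ≤ l + g}, by
    rintro x y ⟨l, hl, g, hg, hy⟩ hxy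
    exact ⟨l, hl, g, hg, hxy.trans hy⟩⟩⟩

/-- The right sum of cuts: the largest cut whose right part contains all `λ + γ`
with `λ > Λ`, `γ > Γ`. -/
def addR (Λ Γ : Cut G) : Cut G :=
  ⟨{x | ∀ l ∉ Λ.L, ∀ g ∉ Γ.L, x < l + g}, by
    intro x y hy hxy l hl g hg
    exact lt_of_le_of_lt hxy (hy l hl g hg)⟩

/-- The right difference of cuts: the largest cut whose right part contains all
`λ − γ` with `λ > Λ`, `γ < Γ`. -/
def sub (Λ Γ : Cut G) : Cut G :=
  ⟨{x | ∀ l ∉ Λ.L, ∀ g ∈ Γ.L, x < l - g}, by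
    intro x y hy hxy l hl g hg
    exact lt_of_le_of_lt hxy (hy l hl g hg)⟩

/-- Translation `γ + Λ` of a cut by a group element, with left part `{γ + λ : λ ∈ Λ^L}`. -/
def transl (γ : G) (Λ : Cut G) : Cut G :=
  ⟨(fun x => γ + x) '' Λ.L, by
    rintro x y ⟨l, hl, rfl⟩ hxy
    exact ⟨x - γ, Λ.lower hl (sub_le_iff_le_add'.mpr hxy), by show γ + (x - γ) = x; rw [add_comm, sub_add_cancel]⟩⟩

/-- Negation of a cut: `-Λ = (-Λ^R, -Λ^L)`. -/
def neg (Λ : Cut G) : Cut G :=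
  ⟨{x | -x ∉ Λ.L}, by
    intro x y hy hxy hx
    exact hy (Λ.lower hx (neg_le_neg hxy))⟩

/-- The `n`-fold left sum `Λ + Γ + ⋯ + Γ` (`Γ` added `n` times). -/
def addn (Λ Γ : Cut G) : ℕ → Cut G
  | 0 => Λ
  | n + 1 => addn Λ Γ n + Γ

/-- The `n`-fold right difference `Λ − Γ − ⋯ − Γ` (`Γ` subtracted `n` times). -/
def subn (Λ Γ : Cut G) : ℕ → Cut G
  | 0 => Λ
  | n + 1 => (subn Λ Γ n).sub Γ

/-- `nΓ = Γ + ⋯ + Γ` (`n` times); by convention `0 • Γ = 0⁺`, the neutral element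
of the left sum. -/
def nsmul : ℕ → Cut G → Cut G
  | 0, _ => rcut 0
  | 1, Γ => Γ
  | n + 2, Γ => nsmul (n + 1) Γ + Γ

/-- `ℤ`-multiples of a cut: `(-n)Γ := -(nΓ)`. -/
def zsmul (n : ℤ) (Γ : Cut G) : Cut G :=
  if 0 ≤ n then nsmul n.toNat Γ else (nsmul (-n).toNat Γ).neg

/-- `ℤΓ := sup {nΓ : n ∈ ℤ}`. -/
def zmul (Γ : Cut G) : Cut G :=
  ⟨⋃ n : ℤ, (zsmul n Γ).L, by
    intro x y hy hxy
    rcases Set.mem_iUnion.1 hy with ⟨n, hn⟩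
    exact Set.mem_iUnion.2 ⟨n, (zsmul n Γ).lower hn hxy⟩⟩

/-- `S⁺`: the smallest cut whose left part contains the set `S`. -/
def ofSet (s : Set G) : Cut G :=
  ⟨{x | ∃ γ ∈ s, x ≤ γ}, by
    rintro x y ⟨γ, hγ, hy⟩ hxy
    exact ⟨γ, hγ, hxy.trans hy⟩⟩

/-- The supremum (maximum) of two cuts. -/
def max (Λ Γ : Cut G) : Cut G :=
  ⟨Λ.L ∪ Γ.L, by
    rintro x y (hy | hy) hxy
    · exact Or.inl (Λ.lower hy hxy)
    · exact Or.inr (Γ.lower hy hxy)⟩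

/-- The infimum of a set of cuts. -/
def inf (s : Set (Cut G)) : Cut G :=
  ⟨{x | ∀ Λ ∈ s, x ∈ Λ.L}, by
    intro x y hy hxy Λ hΛ
    exact Λ.lower (hy Λ hΛ) hxy⟩

end Cut

/-- A valued field `K` (of equal characteristic) with value group `G`, a value group
section `t`, and an embedded residue field `k ⊆ K` (the residue field section is the
inclusion). The valuation is written additively, with `v 0 = ⊤`. -/
structure VData (K : Type u) (G : Type v) [Field K] [AddCommGroup G] [LinearOrder G] [IsOrderedAddMonoid G] where
  v : K → WithTop G
  k : Subfield K
  t : G → K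
  v_eq_top : ∀ x : K, v x = ⊤ ↔ x = 0
  v_mul : ∀ x y : K, v (x * y) = v x + v y
  v_sub : ∀ x y : K, min (v x) (v y) ≤ v (x - y)
  v_surj : ∀ γ : G, ∃ x : K, v x = (γ : WithTop G)
  v_t : ∀ γ : G, v (t γ) = (γ : WithTop G)
  t_neg : ∀ γ : G, t (-γ) = (t γ)⁻¹
  v_k : ∀ c ∈ k, c ≠ 0 → v c = (0 : WithTop G)
  k_res : ∀ x : K, v x = (0 : WithTop G) → ∃ c ∈ k, (0 : WithTop G) < v (x - c)

namespace VData

variable {K : Type u} {G : Type v} [Field K] [AddCommGroup G] [LinearOrder G] [IsOrderedAddMonoid G]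

/-- `O[Λ] = {x ∈ K : v(x) > Λ}`, the (possibly fractional) ideal of the valuation
ring associated with the cut `Λ`. -/
def Oc (S : VData K G) (Λ : Cut G) : Set K :=
  {x | ∀ γ : G, S.v x = (γ : WithTop G) → γ ∉ Λ.L}

/-- `O_R[Λ] = {x ∈ R : v(x) > Λ}`, for a subring `R` of `K`. -/
def OcR (S : VData K G) (R : Subring K) (Λ : Cut G) : Set K :=
  {x | x ∈ R ∧ ∀ γ : G, S.v x = (γ : WithTop G) → γ ∉ Λ.L}

end VData

/-- Axioms CA–CD of a (weak) tower of complements for the valued field `K`: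
each `A[Λ]` is a `k`-subspace of `K` (CA), `A[Λ] ⊕ O[Λ] = K` (CB),
`t(γ)·k ⊆ A[γ⁺]` (CC), and `Γ ≤ Λ ↔ A[Γ] ⊆ A[Λ]` (CD). -/
structure TowerBase {K : Type u} {G : Type v} [Field K] [AddCommGroup G] [LinearOrder G] [IsOrderedAddMonoid G]
    (S : VData K G) where
  A : Cut G → Set K
  zero_mem : ∀ Λ : Cut G, (0 : K) ∈ A Λ
  add_mem : ∀ Λ : Cut G, ∀ x ∈ A Λ, ∀ y ∈ A Λ, x + y ∈ A Λ
  smul_mem : ∀ Λ : Cut G, ∀ c ∈ S.k, ∀ x ∈ A Λ, c * x ∈ A Λ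
  disj : ∀ Λ : Cut G, ∀ x ∈ A Λ, x ∈ S.Oc Λ → x = 0
  spans : ∀ Λ : Cut G, ∀ x : K, ∃ a ∈ A Λ, ∃ o ∈ S.Oc Λ, x = a + o
  sec_mem : ∀ γ : G, ∀ c ∈ S.k, c * S.t γ ∈ A (Cut.rcut γ)
  mono : ∀ Γ Λ : Cut G, Γ ≤ Λ ↔ A Γ ⊆ A Λ

/-- A weak tower of complements: CA–CD together with CF (`A[γ+Λ] = t(γ)·A[Λ]`). -/
structure WeakTower {K : Type u} {G : Type v} [Field K] [AddCommGroup G] [LinearOrder G] [IsOrderedAddMonoid G]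
    (S : VData K G) extends TowerBase S where
  transl_eq : ∀ (γ : G) (Λ : Cut G),
    A (Cut.transl γ Λ) = (fun x => S.t γ * x) '' A Λ

/-- A tower of complements: CA–CD together with the multiplicativity axiom CE
(`A[Λ]·A[Γ] ⊆ A[Λ+Γ]`). -/
structure Tower {K : Type u} {G : Type v} [Field K] [AddCommGroup G] [LinearOrder G] [IsOrderedAddMonoid G]
    (S : VData K G) extends TowerBase S where
  mul_mem : ∀ Λ Γ : Cut G, ∀ x ∈ A Λ, ∀ y ∈ A Γ, x * y ∈ A (Λ + Γ)

/-- Axioms CA–CD of a (weak) tower of complements for a subring `R` of `K`. -/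
structure RTowerBase {K : Type u} {G : Type v} [Field K] [AddCommGroup G] [LinearOrder G] [IsOrderedAddMonoid G]
    (S : VData K G) (R : Subring K) where
  A : Cut G → Set K
  subset_R : ∀ Λ : Cut G, A Λ ⊆ (R : Set K)
  zero_mem : ∀ Λ : Cut G, (0 : K) ∈ A Λ
  add_mem : ∀ Λ : Cut G, ∀ x ∈ A Λ, ∀ y ∈ A Λ, x + y ∈ A Λ
  smul_mem : ∀ Λ : Cut G, ∀ c ∈ S.k, ∀ x ∈ A Λ, c * x ∈ A Λ
  disj : ∀ Λ : Cut G, ∀ x ∈ A Λ, x ∈ S.OcR R Λ → x = 0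
  spans : ∀ Λ : Cut G, ∀ x ∈ R, ∃ a ∈ A Λ, ∃ o ∈ S.OcR R Λ, x = a + o
  sec_mem : ∀ γ : G, ∀ c ∈ S.k, c * S.t γ ∈ A (Cut.rcut γ)
  mono : ∀ Γ Λ : Cut G, Γ ≤ Λ ↔ A Γ ⊆ A Λ

/-- A weak tower of complements for a subring `R` of `K`: CA–CD together with CF. -/
structure RWeakTower {K : Type u} {G : Type v} [Field K] [AddCommGroup G] [LinearOrder G] [IsOrderedAddMonoid G]
    (S : VData K G) (R : Subring K) extends RTowerBase S R where
  transl_eq : ∀ (γ : G) (Λ : Cut G),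
    A (Cut.transl γ Λ) = (fun x => S.t γ * x) '' A Λ

namespace RTowerBase

variable {K : Type u} {G : Type v} [Field K] [AddCommGroup G] [LinearOrder G] [IsOrderedAddMonoid G]
  {S : VData K G} {R : Subring K}

/-- The support of `x ∈ R` with respect to a (weak) tower of complements:
`γ ∈ supp x` iff the coefficient `a_γ(x)` in the decomposition
`x = x₁ + a_γ(x) t(γ) + x₃` (with `x₁ ∈ A[γ⁻]`, `v(x₃) > γ`) is nonzero, i.e.
iff `x ∉ A[γ⁻] + O[γ⁺]`. -/
def supp (T : RTowerBase S R) (x : K) : Set G :=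
  {γ | ¬ ∃ a ∈ T.A (Cut.lcut γ), ∃ o ∈ S.OcR R (Cut.rcut γ), x = a + o}

/-- `μ(x) := (supp x)⁺`, the smallest cut whose left part contains the support. -/
def mu (T : RTowerBase S R) (x : K) : Cut G :=
  Cut.ofSet (T.supp x)

end RTowerBase

namespace TowerBase

variable {K : Type u} {G : Type v} [Field K] [AddCommGroup G] [LinearOrder G] [IsOrderedAddMonoid G]
  {S : VData K G}

/-- `μ(x) := inf {Λ : x ∈ A[Λ]}`. -/
def muInf (T : TowerBase S) (x : K) : Cut G :=
  Cut.inf {Λ | x ∈ T.A Λ}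

end TowerBase

namespace RTowerBase

variable {K : Type u} {G : Type v} [Field K] [AddCommGroup G] [LinearOrder G] [IsOrderedAddMonoid G]
  {S : VData K G} {R : Subring K}

/-- `μ(x) := inf {Λ : x ∈ A[Λ]}`. -/
def muInf (T : RTowerBase S R) (x : K) : Cut G :=
  Cut.inf {Λ | x ∈ T.A Λ}

end RTowerBase


section AuxProof

variable {K : Type u} {G : Type v} [Field K] [AddCommGroup G] [LinearOrder G] [IsOrderedAddMonoid G]
  {S : VData K G} {R : Subring K}

theorem vzero : S.v 0 = ⊤ := (S.v_eq_top 0).mpr rfl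

theorem v_ne_top {x : K} (hx : x ≠ 0) : S.v x ≠ ⊤ :=
  fun h => hx ((S.v_eq_top x).mp h)

theorem vone : S.v 1 = 0 := by
  have h := S.v_mul 1 1
  rw [one_mul] at h
  rcases hv : S.v 1 with _ | α
  · exact absurd ((S.v_eq_top 1).mp hv) one_ne_zero
  · rw [hv] at h
    have h' : (α : WithTop G) = (α : WithTop G) + (α : WithTop G) := h
    have hcast : α = α + α := by exact_mod_cast h'
    have h0 : (0:G) = α := add_left_cancel (a := α) (b := (0:G)) (c := α) (by rw [add_zero]; exact hcast)
    show (α : WithTop G) = 0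
    rw [← h0]; rfl

theorem vnegone : S.v (-1 : K) = 0 := by
  have h := S.v_mul (-1 : K) (-1 : K)
  rw [neg_mul_neg, one_mul, vone] at h
  rcases hv : S.v (-1 : K) with _ | α
  · exact absurd ((S.v_eq_top (-1:K)).mp hv) (by norm_num)
  · rw [hv] at h
    have h' : (0 : WithTop G) = (α : WithTop G) + (α : WithTop G) := h
    have h0 : α + α = 0 := by exact_mod_cast h'.symm
    have h1 : α = 0 := by
      rcases le_or_gt α 0 with hle | hlt
      · rcases lt_or_eq_of_le hle with hlt | heq
        · exfalso; have := add_lt_add hlt hlt; rw [h0, add_zero] at this; exact absurd this (lt_irrefl 0)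
        · exact heq
      · exfalso; have := add_lt_add hlt hlt; rw [h0, add_zero] at this; exact absurd this (lt_irrefl 0)
    show (α : WithTop G) = 0
    rw [h1]; rfl

theorem vneg (x : K) : S.v (-x) = S.v x := by
  have : -x = -1 * x := by ring
  rw [this, S.v_mul, vnegone, zero_add]

theorem vadd (x y : K) : min (S.v x) (S.v y) ≤ S.v (x + y) := by
  have h := S.v_sub x (-y)
  rw [sub_neg_eq_add, vneg] at h
  exact h

theorem t_ne_zero (γ : G) : S.t γ ≠ 0 := by
  intro h
  have := S.v_t γ
  rw [h, vzero] at this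
  exact WithTop.coe_ne_top this.symm

theorem mem_OcR_rcut {x : K} {γ : G} :
    x ∈ S.OcR R (Cut.rcut γ) ↔ x ∈ R ∧ (γ : WithTop G) < S.v x := by
  constructor
  · rintro ⟨hR, h⟩
    refine ⟨hR, ?_⟩
    rcases hv : S.v x with _ | β
    · exact WithTop.coe_lt_top γ
    · exact WithTop.coe_lt_coe.2 (lt_of_not_ge (h β hv))
  · rintro ⟨hR, h⟩
    refine ⟨hR, fun β hβ hle => ?_⟩
    rw [hβ] at h
    exact absurd (WithTop.coe_lt_coe.1 h) (not_lt.2 hle)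

theorem mem_OcR_lcut {x : K} {γ : G} :
    x ∈ S.OcR R (Cut.lcut γ) ↔ x ∈ R ∧ (γ : WithTop G) ≤ S.v x := by
  constructor
  · rintro ⟨hR, h⟩
    refine ⟨hR, ?_⟩
    rcases hv : S.v x with _ | β
    · exact le_top
    · exact WithTop.coe_le_coe.2 (le_of_not_gt (h β hv))
  · rintro ⟨hR, h⟩
    refine ⟨hR, fun β hβ hlt => ?_⟩
    rw [hβ] at h
    exact absurd (WithTop.coe_le_coe.1 h) (not_le.2 hlt)

theorem OcR_zero (Λ : Cut G) : (0 : K) ∈ S.OcR R Λ :=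
  ⟨R.zero_mem, fun γ h => absurd h (by rw [vzero]; exact fun h' => WithTop.coe_ne_top h'.symm)⟩

theorem OcR_sub {Λ : Cut G} {x y : K} (hx : x ∈ S.OcR R Λ) (hy : y ∈ S.OcR R Λ) :
    x - y ∈ S.OcR R Λ := by
  refine ⟨R.sub_mem hx.1 hy.1, fun γ h hmem => ?_⟩
  have hmin : min (S.v x) (S.v y) ≤ S.v (x - y) := S.v_sub x y
  rw [h] at hmin
  rcases min_le_iff.1 hmin with hle | hle
  · rcases hvx : S.v x with _ | β
    · rw [hvx] at hle; exact absurd (top_le_iff.1 hle) WithTop.coe_ne_top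
    · rw [hvx] at hle
      exact hx.2 β hvx (Λ.lower hmem (WithTop.coe_le_coe.1 hle))
  · rcases hvy : S.v y with _ | β
    · rw [hvy] at hle; exact absurd (top_le_iff.1 hle) WithTop.coe_ne_top
    · rw [hvy] at hle
      exact hy.2 β hvy (Λ.lower hmem (WithTop.coe_le_coe.1 hle))

theorem OcR_add {Λ : Cut G} {x y : K} (hx : x ∈ S.OcR R Λ) (hy : y ∈ S.OcR R Λ) :
    x + y ∈ S.OcR R Λ := by
  have hny : -y ∈ S.OcR R Λ := by
    refine ⟨R.neg_mem hy.1, fun γ h => hy.2 γ ?_⟩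
    rw [← vneg y]; exact h
  have := OcR_sub hx hny
  rwa [sub_neg_eq_add] at this

theorem A_neg (B : RTowerBase S R) {Λ : Cut G} {x : K} (hx : x ∈ B.A Λ) : -x ∈ B.A Λ := by
  have := B.smul_mem Λ (-1 : K) (S.k.neg_mem S.k.one_mem) x hx
  rwa [neg_one_mul] at this

theorem A_sub (B : RTowerBase S R) {Λ : Cut G} {x y : K} (hx : x ∈ B.A Λ) (hy : y ∈ B.A Λ) :
    x - y ∈ B.A Λ := by
  have := B.add_mem Λ x hx (-y) (A_neg B hy)
  rwa [← sub_eq_add_neg] at this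

theorem k_mem_R (hO : ∀ x : K, (0 : WithTop G) ≤ S.v x → x ∈ R) {c : K} (hc : c ∈ S.k) :
    c ∈ R := by
  rcases eq_or_ne c 0 with rfl | hne
  · exact R.zero_mem
  · exact hO c (by rw [S.v_k c hc hne])

theorem lcut_le_rcut (γ : G) : Cut.lcut γ ≤ Cut.rcut (γ:G) := fun x hx => le_of_lt hx

theorem decomp_exists (B : RTowerBase S R) (hO : ∀ x : K, (0 : WithTop G) ≤ S.v x → x ∈ R)
    (ht : ∀ γ : G, S.t γ ∈ R) {x : K} (hx : x ∈ R) (γ : G) :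
    ∃ c ∈ S.k, ∃ a ∈ B.A (Cut.lcut γ), ∃ o ∈ S.OcR R (Cut.rcut γ),
      x = a + c * S.t γ + o := by
  obtain ⟨a, ha, o₁, ho₁, hx1⟩ := B.spans (Cut.lcut γ) x hx
  have ho₁' := mem_OcR_lcut.1 ho₁
  rcases eq_or_ne o₁ 0 with rfl | hne
  · exact ⟨0, S.k.zero_mem, a, ha, 0, OcR_zero _, by rw [hx1]; ring⟩
  rcases hvo : S.v o₁ with _ | β
  · exact absurd hvo (v_ne_top hne)
  rw [WithTop.some_eq_coe] at hvo
  have hβγ : γ ≤ β := by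
    have h2 := ho₁'.2; rw [hvo] at h2; exact_mod_cast h2
  rcases lt_or_eq_of_le hβγ with hlt | heq
  · refine ⟨0, S.k.zero_mem, a, ha, o₁, mem_OcR_rcut.2 ⟨ho₁'.1, ?_⟩, by rw [hx1]; ring⟩
    rw [hvo]; exact_mod_cast hlt
  · set y := o₁ * S.t (-γ) with hy
    have hvy : S.v y = 0 := by
      rw [hy, S.v_mul, hvo, S.v_t, ← WithTop.coe_add, ← heq, add_neg_cancel]; rfl
    obtain ⟨c, hck, hvc⟩ := S.k_res y hvy
    have hty : y * S.t γ = o₁ := by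
      rw [hy, S.t_neg, mul_assoc, inv_mul_cancel₀ (t_ne_zero γ), mul_one]
    refine ⟨c, hck, a, ha, o₁ - c * S.t γ,
      mem_OcR_rcut.2 ⟨R.sub_mem ho₁'.1 (R.mul_mem (k_mem_R hO hck) (ht γ)), ?_⟩,
      by rw [hx1]; ring⟩
    have hoe : o₁ - c * S.t γ = (y - c) * S.t γ := by rw [sub_mul, hty]
    rw [hoe, S.v_mul, S.v_t]
    rcases hvyc : S.v (y - c) with _ | ε
    · rw [show (none : WithTop G) = (⊤ : WithTop G) from rfl, top_add]
      exact WithTop.coe_lt_top γ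
    · rw [WithTop.some_eq_coe] at hvyc
      rw [hvyc] at hvc
      have hε : (0:G) < ε := by exact_mod_cast hvc
      rw [show (some ε : WithTop G) = (ε : WithTop G) from rfl, ← WithTop.coe_add]
      exact WithTop.coe_lt_coe.2 (lt_add_of_pos_left γ hε)

theorem decomp_unique (B : RTowerBase S R) (hO : ∀ x : K, (0 : WithTop G) ≤ S.v x → x ∈ R)
    (ht : ∀ γ : G, S.t γ ∈ R) (γ : G) {c c' a a' o o' : K}
    (hck : c ∈ S.k) (hck' : c' ∈ S.k)
    (ha : a ∈ B.A (Cut.lcut γ)) (ha' : a' ∈ B.A (Cut.lcut γ))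
    (ho : o ∈ S.OcR R (Cut.rcut γ)) (ho' : o' ∈ S.OcR R (Cut.rcut γ))
    (heq : a + c * S.t γ + o = a' + c' * S.t γ + o') : c = c' := by
  have hd : (a - a') + (c - c') * S.t γ = o' - o := by linear_combination heq
  have hmemA : (a - a') + (c - c') * S.t γ ∈ B.A (Cut.rcut γ) :=
    B.add_mem _ _ ((B.mono (Cut.lcut γ) (Cut.rcut γ)).1 (lcut_le_rcut γ) (A_sub B ha ha'))
      _ (B.sec_mem γ (c - c') (S.k.sub_mem hck hck'))
  have hmemO : (a - a') + (c - c') * S.t γ ∈ S.OcR R (Cut.rcut γ) := by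
    rw [hd]; exact OcR_sub ho' ho
  have hzero : (a - a') + (c - c') * S.t γ = 0 := B.disj _ _ hmemA hmemO
  by_contra hne
  have hkne : c - c' ≠ 0 := sub_ne_zero.2 hne
  have h2 : (c - c') * S.t γ = a' - a := by linear_combination hzero
  have hv1 : S.v ((c - c') * S.t γ) = (γ : WithTop G) := by
    rw [S.v_mul, S.v_k _ (S.k.sub_mem hck hck') hkne, S.v_t, zero_add]
  have hmem : (c - c') * S.t γ ∈ S.OcR R (Cut.lcut γ) :=
    mem_OcR_lcut.2 ⟨R.mul_mem (R.sub_mem (k_mem_R hO hck) (k_mem_R hO hck')) (ht γ),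
      by rw [hv1]⟩
  have hz : (c - c') * S.t γ = 0 :=
    B.disj _ _ (by rw [h2]; exact A_sub B ha' ha) hmem
  rcases mul_eq_zero.1 hz with h | h
  · exact hkne h
  · exact t_ne_zero γ h

theorem mem_supp_iff (B : RTowerBase S R) (hO : ∀ x : K, (0 : WithTop G) ≤ S.v x → x ∈ R)
    (ht : ∀ γ : G, S.t γ ∈ R) {x c a o : K} {γ : G}
    (hck : c ∈ S.k) (ha : a ∈ B.A (Cut.lcut γ)) (ho : o ∈ S.OcR R (Cut.rcut γ))
    (hd : x = a + c * S.t γ + o) : γ ∈ B.supp x ↔ c ≠ 0 := by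
  constructor
  · intro hs hc0
    exact hs ⟨a, ha, o, ho, by rw [hd, hc0]; ring⟩
  · intro hc hs
    obtain ⟨a', ha', o', ho', hx'⟩ := hs
    apply hc
    refine decomp_unique B hO ht γ hck S.k.zero_mem ha ha' ho ho' ?_
    rw [← hd, zero_mul, add_zero]
    exact hx'

theorem v_min (B : RTowerBase S R) {x : K} (hx : x ∈ R) (hne : x ≠ 0) :
    ∃ γ ∈ B.supp x, S.v x = (γ : WithTop G) ∧ ∀ δ ∈ B.supp x, γ ≤ δ := by
  rcases hv : S.v x with _ | γ₀
  · exact absurd hv (v_ne_top hne)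
  rw [WithTop.some_eq_coe] at hv
  refine ⟨γ₀, ?_, ?_, ?_⟩
  case refine_2 => exact rfl
  · by_contra hns
    have hdec : ∃ a ∈ B.A (Cut.lcut γ₀), ∃ o ∈ S.OcR R (Cut.rcut γ₀), x = a + o := by
      by_contra h
      exact hns h
    obtain ⟨a, ha, o, ho, hxo⟩ := hdec
    have hvo := (mem_OcR_rcut.1 ho).2
    have h1 : a = x - o := by rw [hxo]; ring
    have hmin : min (S.v x) (S.v o) ≤ S.v a := by rw [h1]; exact S.v_sub x o
    rw [hv, min_eq_left (le_of_lt hvo)] at hmin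
    have haO : a ∈ S.OcR R (Cut.lcut γ₀) := mem_OcR_lcut.2 ⟨B.subset_R _ ha, hmin⟩
    have ha0 : a = 0 := B.disj _ a ha haO
    rw [ha0, zero_add] at hxo
    rw [← hxo, hv] at hvo
    exact lt_irrefl _ hvo
  · intro δ hδ
    by_contra hlt
    push_neg at hlt
    exact hδ ⟨0, B.zero_mem _, x, mem_OcR_rcut.2 ⟨hx, by rw [hv]; exact_mod_cast hlt⟩,
      (zero_add x).symm⟩

theorem supp_wf (B : RTowerBase S R) {x : K} (hx : x ∈ R) : (B.supp x).IsWF := by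
  rw [Set.isWF_iff_no_descending_seq]
  intro f hf hmem
  set Λ : Cut G := ⟨{g | ∀ n, g ≤ f n}, fun a b hb hab n => le_trans hab (hb n)⟩ with hΛ
  obtain ⟨a, ha, o, ho, hxo⟩ := B.spans Λ x hx
  have hom : ∃ m, o ∈ S.OcR R (Cut.rcut (f m)) := by
    rcases hvo : S.v o with _ | β
    · exact ⟨0, mem_OcR_rcut.2 ⟨ho.1, by rw [hvo]; exact WithTop.coe_lt_top _⟩⟩
    · rw [WithTop.some_eq_coe] at hvo
      have hβ : β ∉ Λ.L := ho.2 β hvo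
      have hβ' : ∃ n, ¬ β ≤ f n := by
        by_contra h
        push_neg at h
        exact hβ h
      obtain ⟨n, hn⟩ := hβ'
      refine ⟨n + 1, mem_OcR_rcut.2 ⟨ho.1, ?_⟩⟩
      rw [hvo]
      exact_mod_cast lt_trans (hf (Nat.lt_succ_self n)) (lt_of_not_ge hn)
  obtain ⟨m, hom⟩ := hom
  have hA : a ∈ B.A (Cut.lcut (f m)) :=
    (B.mono Λ (Cut.lcut (f m))).1
      (fun g hg => lt_of_le_of_lt (hg (m+1)) (hf (Nat.lt_succ_self m))) ha
  exact (hmem m) ⟨a, hA, o, hom, hxo⟩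

noncomputable def coeffK (B : RTowerBase S R) (hO : ∀ x : K, (0 : WithTop G) ≤ S.v x → x ∈ R)
    (ht : ∀ γ : G, S.t γ ∈ R) (x : R) (γ : G) : S.k :=
  ⟨Classical.choose (decomp_exists B hO ht x.2 γ),
   (Classical.choose_spec (decomp_exists B hO ht x.2 γ)).1⟩

theorem coeffK_spec (B : RTowerBase S R) (hO : ∀ x : K, (0 : WithTop G) ≤ S.v x → x ∈ R)
    (ht : ∀ γ : G, S.t γ ∈ R) (x : R) (γ : G) :
    ∃ a ∈ B.A (Cut.lcut γ), ∃ o ∈ S.OcR R (Cut.rcut γ),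
      (x : K) = a + (coeffK B hO ht x γ : K) * S.t γ + o :=
  (Classical.choose_spec (decomp_exists B hO ht x.2 γ)).2

theorem coeffK_unique (B : RTowerBase S R) (hO : ∀ x : K, (0 : WithTop G) ≤ S.v x → x ∈ R)
    (ht : ∀ γ : G, S.t γ ∈ R) (x : R) (γ : G) {c : S.k}
    (h : ∃ a ∈ B.A (Cut.lcut γ), ∃ o ∈ S.OcR R (Cut.rcut γ),
      (x : K) = a + (c : K) * S.t γ + o) :
    coeffK B hO ht x γ = c := by
  obtain ⟨a, ha, o, ho, hd⟩ := h
  obtain ⟨a', ha', o', ho', hd'⟩ := coeffK_spec B hO ht x γ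
  exact Subtype.ext (decomp_unique B hO ht γ (coeffK B hO ht x γ).2 c.2 ha' ha ho' ho
    (by rw [← hd', ← hd]))

theorem coeffK_zero (B : RTowerBase S R) (hO : ∀ x : K, (0 : WithTop G) ≤ S.v x → x ∈ R)
    (ht : ∀ γ : G, S.t γ ∈ R) (γ : G) : coeffK B hO ht 0 γ = 0 :=
  coeffK_unique B hO ht 0 γ ⟨0, B.zero_mem _, 0, OcR_zero _, by
    push_cast
    ring⟩

theorem coeffK_add (B : RTowerBase S R) (hO : ∀ x : K, (0 : WithTop G) ≤ S.v x → x ∈ R)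
    (ht : ∀ γ : G, S.t γ ∈ R) (x y : R) (γ : G) :
    coeffK B hO ht (x + y) γ = coeffK B hO ht x γ + coeffK B hO ht y γ := by
  obtain ⟨a₁, ha₁, o₁, ho₁, hd₁⟩ := coeffK_spec B hO ht x γ
  obtain ⟨a₂, ha₂, o₂, ho₂, hd₂⟩ := coeffK_spec B hO ht y γ
  refine coeffK_unique B hO ht (x + y) γ
    ⟨a₁ + a₂, B.add_mem _ _ ha₁ _ ha₂, o₁ + o₂, OcR_add ho₁ ho₂, ?_⟩
  push_cast
  rw [hd₁, hd₂]
  ring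

theorem coeffK_ne_zero_iff (B : RTowerBase S R) (hO : ∀ x : K, (0 : WithTop G) ≤ S.v x → x ∈ R)
    (ht : ∀ γ : G, S.t γ ∈ R) (x : R) (γ : G) :
    coeffK B hO ht x γ ≠ 0 ↔ γ ∈ B.supp (x : K) := by
  obtain ⟨a, ha, o, ho, hd⟩ := coeffK_spec B hO ht x γ
  rw [mem_supp_iff B hO ht (coeffK B hO ht x γ).2 ha ho hd]
  exact ⟨fun h hc => h (Subtype.ext hc), fun h hc => h (by rw [hc]; exact ZeroMemClass.coe_zero _)⟩

end AuxProof

/-- Let `(A[Λ])` be a weak tower of complements for a ring `R ⊆ K`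
(containing the valuation ring and the image of `t`).  Then for every `x ∈ R` the
support `supp(x)` is a well-ordered subset of `G` with `min (supp x) = v(x)`; hence
the map `x ↦ Σ_γ a_γ(x) t^γ` is an injective valuation-preserving homomorphism of
additive groups from `R` into the group of generalized power series `k((G))`. -/
theorem supp_wellOrdered_and_power_series_embedding {K : Type u} {G : Type v}
    [Field K] [AddCommGroup G] [LinearOrder G] [IsOrderedAddMonoid G]
    (S : VData K G) (R : Subring K)
    (hO : ∀ x : K, (0 : WithTop G) ≤ S.v x → x ∈ R)
    (ht : ∀ γ : G, S.t γ ∈ R)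
    (T : RWeakTower S R) :
    (∀ x : K, x ∈ R → (T.toRTowerBase.supp x).IsWF) ∧
    (∀ x : K, x ∈ R → x ≠ 0 → ∃ γ ∈ T.toRTowerBase.supp x,
      S.v x = (γ : WithTop G) ∧ ∀ δ ∈ T.toRTowerBase.supp x, γ ≤ δ) ∧
    ∃ Φ : R →+ HahnSeries G S.k,
      Function.Injective Φ ∧
      (∀ x : R, (Φ x).support = T.toRTowerBase.supp (x : K)) ∧
      (∀ x : R, ∀ γ : G, ∃ a ∈ T.A (Cut.lcut γ), ∃ o ∈ S.OcR R (Cut.rcut γ),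
        (x : K) = a + ((Φ x).coeff γ : K) * S.t γ + o) ∧
      (∀ x : R, (x : K) ≠ 0 → ∀ γ : G,
        S.v (x : K) = (γ : WithTop G) ↔
          γ ∈ (Φ x).support ∧ ∀ δ ∈ (Φ x).support, γ ≤ δ) := by
  classical
  refine ⟨fun x hx => supp_wf T.toRTowerBase hx,
          fun x hx hne => v_min T.toRTowerBase hx hne, ?_⟩
  set B := T.toRTowerBase with hBdef
  have hsupp : ∀ x : R, Function.support (fun γ => coeffK B hO ht x γ) = B.supp (x : K) := by
    intro x; ext γ
    simp only [Function.mem_support]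
    exact coeffK_ne_zero_iff B hO ht x γ
  have hpwo : ∀ x : R, (Function.support (fun γ => coeffK B hO ht x γ)).IsPWO := by
    intro x; rw [hsupp]; exact (supp_wf B x.2).isPWO
  set Φfun : R → HahnSeries G S.k := fun x => ⟨fun γ => coeffK B hO ht x γ, hpwo x⟩
    with hΦfun
  have hcoeff : ∀ (x : R) (γ : G), (Φfun x).coeff γ = coeffK B hO ht x γ := fun _ _ => rfl
  set Φ : R →+ HahnSeries G S.k :=
    { toFun := Φfun
      map_zero' := by
        apply HahnSeries.coeff_injective
        funext γ
        rw [HahnSeries.coeff_zero]  -- this rewrites RHS? goal (Φfun 0).coeff = (0 : HahnSeries ..).coeff applied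
        exact coeffK_zero B hO ht γ
      map_add' := by
        intro x y
        apply HahnSeries.coeff_injective
        funext γ
        show (Φfun (x + y)).coeff γ = (Φfun x + Φfun y).coeff γ
        rw [HahnSeries.coeff_add, hcoeff, hcoeff, hcoeff]
        exact coeffK_add B hO ht x y γ } with hΦ
  have hΦapp : ∀ x : R, Φ x = Φfun x := fun _ => rfl
  have hsuppEq : ∀ x : R, (Φ x).support = B.supp (x : K) := by
    intro x
    rw [hΦapp]
    show Function.support (Φfun x).coeff = B.supp (x : K)
    rw [show (Φfun x).coeff = fun γ => coeffK B hO ht x γ from rfl]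
    exact hsupp x
  refine ⟨Φ, ?_, hsuppEq, ?_, ?_⟩
  · rw [injective_iff_map_eq_zero]
    intro x hx0
    by_contra hne
    have hxK : (x : K) ≠ 0 := fun h => hne (Subtype.ext h)
    obtain ⟨γ, hγ, -, -⟩ := v_min B x.2 hxK
    have hc : coeffK B hO ht x γ ≠ 0 := (coeffK_ne_zero_iff B hO ht x γ).2 hγ
    apply hc
    have h0 := congrArg (fun s => HahnSeries.coeff s γ) hx0
    simpa [hΦapp, hcoeff] using h0
  · intro x γ
    exact coeffK_spec B hO ht x γ
  · intro x hxK γ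
    rw [hsuppEq x]
    constructor
    · intro hv
      obtain ⟨γ₀, hγ₀, hv₀, hmin⟩ := v_min B x.2 hxK
      have hγγ : γ = γ₀ := by
        rw [hv] at hv₀
        exact_mod_cast hv₀
      rw [hγγ]
      exact ⟨hγ₀, hmin⟩
    · rintro ⟨hγ, hmin⟩
      obtain ⟨γ₀, hγ₀, hv₀, hmin₀⟩ := v_min B x.2 hxK
      have hγγ : γ = γ₀ := le_antisymm (hmin γ₀ hγ₀) (hmin₀ γ hγ)
      rw [hγγ]
      exact hv₀
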